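/- Let A, B be K-algebras with bases {e_i}_{i∈Λ}, {u_i}_{i∈Λ} (Λ possibly infinite), structure constants γ_{ij}^k, τ_{lm}^n, and suppose f: A → B is a K-algebra isomorphism with f(e_i) = Σ_j t_i^j u_j and f⁻¹(u_i) = Σ_j s_i^j e_j. Then the set of zeros in K of the ideal I_K^f of K[X] generated by the polynomials p_{ijn} = Σ_{k∈Σ_{ij}} γ_{ij}^k T_k^n − Σ_{l∈Λ_i^f, m∈Λ_j^f} τ_{lm}^n T_i^l T_j^m, q_{ik} = Σ_{j∈Λ_i^f} T_i^j S_j^k − δ_{ik}, r_{ik} = Σ_{j∈Λ_i^{f⁻¹}} S_i^j T_j^k − δ_{ik}, together with the indeterminates T_i^j for j ∉ Λ_i^f and S_i^j for j ∉ Λ_i^{f⁻¹}, is in bijection with the set Isom_f(A,B) of K-algebra isomorphisms g: A → B whose matrix entries (and those of g⁻¹) vanish wherever those of f (resp. f⁻¹) vanish. -/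

import Mathlib

open MvPolynomial

variable (K : Type u) [Field K] (Λ : Type v) [DecidableEq Λ] (A B : Type w)
  [NonUnitalNonAssocRing A] [Module K A] [SMulCommClass K A A] [IsScalarTower K A A]
  [NonUnitalNonAssocRing B] [Module K B] [SMulCommClass K B B] [IsScalarTower K B B]

/-- The polynomial `p_{ijn} = Σ_{k ∈ Σ_{ij}} γ_{ij}^k T_k^n −
Σ_{l ∈ Λ_i^f, m ∈ Λ_j^f} τ_{lm}^n T_i^l T_j^m`, where `t_i^j = (bB.repr (f (bA i))) j`,
`γ_{ij}^k = (bA.repr (bA i * bA j)) k`, `τ_{lm}^n = (bB.repr (bB l * bB m)) n`, the variable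
`T_i^j` is `X (Sum.inl (i,j))` and `S_i^j` is `X (Sum.inr (i,j))`; the index sets
`Σ_{ij}`, `Λ_i^f` are the (finite) supports of the relevant coordinate functions. -/
noncomputable def pPolyInf (bA : Module.Basis Λ K A) (bB : Module.Basis Λ K B) (f : A ≃ₗ[K] B) (i j n : Λ) :
    MvPolynomial ((Λ × Λ) ⊕ (Λ × Λ)) K :=
  (∑ k ∈ (bA.repr (bA i * bA j)).support,
      C (bA.repr (bA i * bA j) k) * X (Sum.inl (k, n))) -
    ∑ l ∈ (bB.repr (f (bA i))).support, ∑ m ∈ (bB.repr (f (bA j))).support,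
      C (bB.repr (bB l * bB m) n) * X (Sum.inl (i, l)) * X (Sum.inl (j, m))

/-- The polynomial `q_{ik} = Σ_{j ∈ Λ_i^f} T_i^j S_j^k − δ_{ik}`. -/
noncomputable def qPolyInf (bA : Module.Basis Λ K A) (bB : Module.Basis Λ K B) (f : A ≃ₗ[K] B) (i k : Λ) :
    MvPolynomial ((Λ × Λ) ⊕ (Λ × Λ)) K :=
  (∑ j ∈ (bB.repr (f (bA i))).support, X (Sum.inl (i, j)) * X (Sum.inr (j, k))) -
    C (if i = k then 1 else 0)

/-- The polynomial `r_{ik} = Σ_{j ∈ Λ_i^{f⁻¹}} S_i^j T_j^k − δ_{ik}`, where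
`s_i^j = (bA.repr (f.symm (bB i))) j`. -/
noncomputable def rPolyInf (bA : Module.Basis Λ K A) (bB : Module.Basis Λ K B) (f : A ≃ₗ[K] B) (i k : Λ) :
    MvPolynomial ((Λ × Λ) ⊕ (Λ × Λ)) K :=
  (∑ j ∈ (bA.repr (f.symm (bB i))).support, X (Sum.inr (i, j)) * X (Sum.inl (j, k))) -
    C (if i = k then 1 else 0)

/-- The ideal `I_K^f` generated by all the `p_{ijn}`, `q_{ik}`, `r_{ik}`, together with the
indeterminates `T_i^j` for `j ∉ Λ_i^f` and `S_i^j` for `j ∉ Λ_i^{f⁻¹}`. -/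
noncomputable def isoIdealInf (bA : Module.Basis Λ K A) (bB : Module.Basis Λ K B) (f : A ≃ₗ[K] B) :
    Ideal (MvPolynomial ((Λ × Λ) ⊕ (Λ × Λ)) K) :=
  Ideal.span
    ((Set.range fun x : Λ × Λ × Λ => pPolyInf K Λ A B bA bB f x.1 x.2.1 x.2.2) ∪
     (Set.range fun x : Λ × Λ => qPolyInf K Λ A B bA bB f x.1 x.2) ∪
     (Set.range fun x : Λ × Λ => rPolyInf K Λ A B bA bB f x.1 x.2) ∪
     {w | ∃ i j, bB.repr (f (bA i)) j = 0 ∧ w = X (Sum.inl (i, j))} ∪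
     {w | ∃ i j, bA.repr (f.symm (bB i)) j = 0 ∧ w = X (Sum.inr (i, j))})

set_option linter.unusedSectionVars false
set_option linter.unusedVariables false
set_option maxHeartbeats 1000000

/-! ### Auxiliary lemmas -/

lemma repr_finset_sum (b : Module.Basis Λ K B) (S : Finset Λ) (c : Λ → K) (k : Λ) :
    b.repr (∑ j ∈ S, c j • b j) k = if k ∈ S then c k else 0 := by
  simp only [map_sum, map_smul, Module.Basis.repr_self, Finsupp.coe_finset_sum, Finset.sum_apply,
    Finsupp.coe_smul, Pi.smul_apply, Finsupp.single_apply, smul_eq_mul, mul_ite, mul_one, mul_zero]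
  exact Finset.sum_ite_eq' S k c

lemma sum_repr_subset (b : Module.Basis Λ K B) (v : B) {T : Finset Λ}
    (h : (b.repr v).support ⊆ T) : ∑ j ∈ T, b.repr v j • b j = v := by
  conv_rhs => rw [← b.linearCombination_repr v]
  rw [Finsupp.linearCombination_apply, Finsupp.sum_of_support_subset _ h _ (by simp)]

lemma repr_map_superset (bA : Module.Basis Λ K A) (bB : Module.Basis Λ K B) (g : A →ₗ[K] B) (v : A)
    {T : Finset Λ} (h : (bA.repr v).support ⊆ T) (k : Λ) :
    bB.repr (g v) k = ∑ j ∈ T, bA.repr v j * bB.repr (g (bA j)) k := by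
  conv_lhs => rw [← sum_repr_subset K Λ A bA v h]
  simp [map_sum, map_smul, Finset.sum_apply]

lemma repr_map_superset' (bA : Module.Basis Λ K A) (bB : Module.Basis Λ K B) (g : B →ₗ[K] A) (v : B)
    {T : Finset Λ} (h : (bB.repr v).support ⊆ T) (k : Λ) :
    bA.repr (g v) k = ∑ j ∈ T, bB.repr v j * bA.repr (g (bB j)) k := by
  conv_lhs => rw [← sum_repr_subset K Λ B bB v h]
  simp [map_sum, map_smul, Finset.sum_apply]

lemma repr_mul_superset (bB : Module.Basis Λ K B) (x y : B) {T1 T2 : Finset Λ}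
    (h1 : (bB.repr x).support ⊆ T1) (h2 : (bB.repr y).support ⊆ T2) (n : Λ) :
    bB.repr (x * y) n =
      ∑ l ∈ T1, ∑ m ∈ T2, bB.repr x l * bB.repr y m * bB.repr (bB l * bB m) n := by
  conv_lhs => rw [← sum_repr_subset K Λ B bB x h1, ← sum_repr_subset K Λ B bB y h2]
  rw [Finset.sum_mul_sum]
  simp only [smul_mul_smul_comm, map_sum, map_smul, Finsupp.coe_finset_sum, Finset.sum_apply,
    Finsupp.coe_smul, Pi.smul_apply, smul_eq_mul]

lemma eval_pPoly (bA : Module.Basis Λ K A) (bB : Module.Basis Λ K B) (f : A ≃ₗ[K] B) (i j n : Λ)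
    (a : ((Λ × Λ) ⊕ (Λ × Λ)) → K) :
    eval a (pPolyInf K Λ A B bA bB f i j n) =
      (∑ k ∈ (bA.repr (bA i * bA j)).support, bA.repr (bA i * bA j) k * a (Sum.inl (k, n))) -
      ∑ l ∈ (bB.repr (f (bA i))).support, ∑ m ∈ (bB.repr (f (bA j))).support,
        bB.repr (bB l * bB m) n * a (Sum.inl (i, l)) * a (Sum.inl (j, m)) := by
  simp [pPolyInf]

lemma eval_qPoly (bA : Module.Basis Λ K A) (bB : Module.Basis Λ K B) (f : A ≃ₗ[K] B) (i k : Λ)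
    (a : ((Λ × Λ) ⊕ (Λ × Λ)) → K) :
    eval a (qPolyInf K Λ A B bA bB f i k) =
      (∑ j ∈ (bB.repr (f (bA i))).support, a (Sum.inl (i, j)) * a (Sum.inr (j, k))) -
      (if i = k then 1 else 0) := by
  simp [qPolyInf]

lemma eval_rPoly (bA : Module.Basis Λ K A) (bB : Module.Basis Λ K B) (f : A ≃ₗ[K] B) (i k : Λ)
    (a : ((Λ × Λ) ⊕ (Λ × Λ)) → K) :
    eval a (rPolyInf K Λ A B bA bB f i k) =
      (∑ j ∈ (bA.repr (f.symm (bB i))).support, a (Sum.inr (i, j)) * a (Sum.inl (j, k))) -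
      (if i = k then 1 else 0) := by
  simp [rPolyInf]

/-- The map `A → B` built from a zero `a` of the ideal. -/
noncomputable def gMapInf (bA : Module.Basis Λ K A) (bB : Module.Basis Λ K B) (f : A ≃ₗ[K] B)
    (a : ((Λ × Λ) ⊕ (Λ × Λ)) → K) : A →ₗ[K] B :=
  bA.constr K fun i => ∑ j ∈ (bB.repr (f (bA i))).support, a (Sum.inl (i, j)) • bB j

/-- The map `B → A` built from a zero `a` of the ideal. -/
noncomputable def hMapInf (bA : Module.Basis Λ K A) (bB : Module.Basis Λ K B) (f : A ≃ₗ[K] B)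
    (a : ((Λ × Λ) ⊕ (Λ × Λ)) → K) : B →ₗ[K] A :=
  bB.constr K fun i => ∑ j ∈ (bA.repr (f.symm (bB i))).support, a (Sum.inr (i, j)) • bA j

theorem forwardInf (bA : Module.Basis Λ K A) (bB : Module.Basis Λ K B) (f : A ≃ₗ[K] B)
    (a : ((Λ × Λ) ⊕ (Λ × Λ)) → K)
    (ha : ∀ p ∈ isoIdealInf K Λ A B bA bB f, eval a p = 0) :
    ∃ g : A ≃ₗ[K] B,
      (∀ x y, g (x * y) = g x * g y) ∧
      (∀ i j, bB.repr (g (bA i)) j = a (Sum.inl (i, j))) ∧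
      (∀ i j, bA.repr (g.symm (bB i)) j = a (Sum.inr (i, j))) := by
  classical
  -- vanishing conditions
  have hT : ∀ i j, bB.repr (f (bA i)) j = 0 → a (Sum.inl (i, j)) = 0 := by
    intro i j h
    have := ha (X (Sum.inl (i, j))) (Ideal.subset_span (Or.inl (Or.inr ⟨i, j, h, rfl⟩)))
    simpa using this
  have hS : ∀ i j, bA.repr (f.symm (bB i)) j = 0 → a (Sum.inr (i, j)) = 0 := by
    intro i j h
    have := ha (X (Sum.inr (i, j))) (Ideal.subset_span (Or.inr ⟨i, j, h, rfl⟩))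
    simpa using this
  have hq : ∀ i k, (∑ j ∈ (bB.repr (f (bA i))).support,
      a (Sum.inl (i, j)) * a (Sum.inr (j, k))) = if i = k then 1 else 0 := by
    intro i k
    have := ha _ (Ideal.subset_span
      (Or.inl (Or.inl (Or.inl (Or.inr ⟨(i, k), rfl⟩)))))
    rw [eval_qPoly] at this
    exact sub_eq_zero.mp this
  have hr : ∀ i k, (∑ j ∈ (bA.repr (f.symm (bB i))).support,
      a (Sum.inr (i, j)) * a (Sum.inl (j, k))) = if i = k then 1 else 0 := by
    intro i k
    have := ha _ (Ideal.subset_span (Or.inl (Or.inl (Or.inr ⟨(i, k), rfl⟩))))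
    rw [eval_rPoly] at this
    exact sub_eq_zero.mp this
  have hp : ∀ i j n, (∑ k ∈ (bA.repr (bA i * bA j)).support,
      bA.repr (bA i * bA j) k * a (Sum.inl (k, n))) =
      ∑ l ∈ (bB.repr (f (bA i))).support, ∑ m ∈ (bB.repr (f (bA j))).support,
        bB.repr (bB l * bB m) n * a (Sum.inl (i, l)) * a (Sum.inl (j, m)) := by
    intro i j n
    have := ha _ (Ideal.subset_span
      (Or.inl (Or.inl (Or.inl (Or.inl ⟨(i, j, n), rfl⟩)))))
    rw [eval_pPoly] at this
    exact sub_eq_zero.mp this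
  set g0 := gMapInf K Λ A B bA bB f a with hg0
  set h0 := hMapInf K Λ A B bA bB f a with hh0
  have hgb : ∀ i, g0 (bA i) =
      ∑ j ∈ (bB.repr (f (bA i))).support, a (Sum.inl (i, j)) • bB j := by
    intro i; rw [hg0, gMapInf]; exact bA.constr_basis K _ i
  have hhb : ∀ i, h0 (bB i) =
      ∑ j ∈ (bA.repr (f.symm (bB i))).support, a (Sum.inr (i, j)) • bA j := by
    intro i; rw [hh0, hMapInf]; exact bB.constr_basis K _ i
  have hgr : ∀ i k, bB.repr (g0 (bA i)) k = a (Sum.inl (i, k)) := by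
    intro i k
    rw [hgb, repr_finset_sum]
    split_ifs with h
    · rfl
    · exact (hT i k (Finsupp.notMem_support_iff.mp h)).symm
  have hhr : ∀ i k, bA.repr (h0 (bB i)) k = a (Sum.inr (i, k)) := by
    intro i k
    rw [hhb, repr_finset_sum]
    split_ifs with h
    · rfl
    · exact (hS i k (Finsupp.notMem_support_iff.mp h)).symm
  have hsuppg : ∀ i, (bB.repr (g0 (bA i))).support ⊆ (bB.repr (f (bA i))).support := by
    intro i j hj
    rw [Finsupp.mem_support_iff] at hj ⊢
    intro h0'
    exact hj (by rw [hgr]; exact hT i j h0')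
  have hsupph : ∀ i, (bA.repr (h0 (bB i))).support ⊆ (bA.repr (f.symm (bB i))).support := by
    intro i j hj
    rw [Finsupp.mem_support_iff] at hj ⊢
    intro h0'
    exact hj (by rw [hhr]; exact hS i j h0')
  have hcomp1 : h0.comp g0 = LinearMap.id := by
    refine bA.ext fun i => ?_
    refine bA.repr.injective (Finsupp.ext fun k => ?_)
    simp only [LinearMap.comp_apply, LinearMap.id_apply]
    rw [repr_map_superset' K Λ A B bA bB h0 (g0 (bA i)) (hsuppg i) k]
    simp_rw [hgr, hhr]
    rw [hq i k, bA.repr_self, Finsupp.single_apply]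
  have hcomp2 : g0.comp h0 = LinearMap.id := by
    refine bB.ext fun i => ?_
    refine bB.repr.injective (Finsupp.ext fun k => ?_)
    simp only [LinearMap.comp_apply, LinearMap.id_apply]
    rw [repr_map_superset K Λ A B bA bB g0 (h0 (bB i)) (hsupph i) k]
    simp_rw [hhr, hgr]
    rw [hr i k, bB.repr_self, Finsupp.single_apply]
  refine ⟨LinearEquiv.ofLinear g0 h0 hcomp2 hcomp1, ?_, ?_, ?_⟩
  · -- multiplicativity
    have hmulb : ∀ i j, g0 (bA i * bA j) = g0 (bA i) * g0 (bA j) := by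
      intro i j
      refine bB.repr.injective (Finsupp.ext fun n => ?_)
      rw [repr_map_superset K Λ A B bA bB g0 (bA i * bA j) (subset_refl _) n,
        repr_mul_superset K Λ B bB _ _ (hsuppg i) (hsuppg j) n]
      simp_rw [hgr]
      rw [hp i j n]
      exact Finset.sum_congr rfl fun l _ => Finset.sum_congr rfl fun m _ => by ring
    have h2 : (LinearMap.mul K A).compr₂ g0 = (LinearMap.mul K B).compl₁₂ g0 g0 :=
      bA.ext fun i => bA.ext fun j => by
        simpa only [LinearMap.compr₂_apply, LinearMap.compl₁₂_apply,
          LinearMap.mul_apply'] using hmulb i j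
    intro x y
    have := LinearMap.congr_fun (LinearMap.congr_fun h2 x) y
    simpa only [LinearMap.compr₂_apply, LinearMap.compl₁₂_apply, LinearMap.mul_apply',
      LinearEquiv.ofLinear_apply] using this
  · intro i j
    rw [LinearEquiv.ofLinear_apply, hgr]
  · intro i j
    rw [LinearEquiv.ofLinear_symm_apply, hhr]

/-- Let `A`, `B` be (possibly infinite-dimensional, not necessarily associative)
`K`-algebras with bases `{e_i}`, `{u_i}` indexed by `Λ`, and let `f : A → B` be a `K`-algebra
isomorphism with matrices `t_i^j`, `s_i^j` (for `f` and `f⁻¹`). Then the set of algebraic zeros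
(in `K`) of the ideal `I_K^f` is in bijection with the set `Isom_f(A,B)` of `K`-algebra
isomorphisms `g : A → B` whose matrix entries (and those of `g⁻¹`) vanish wherever those of `f`
(resp. `f⁻¹`) vanish. -/
theorem stmt19 (bA : Module.Basis Λ K A) (bB : Module.Basis Λ K B) (f : A ≃ₗ[K] B)
    (hf : ∀ x y, f (x * y) = f x * f y) :
    Nonempty
      ({a : ((Λ × Λ) ⊕ (Λ × Λ)) → K //
          ∀ p ∈ isoIdealInf K Λ A B bA bB f, eval a p = 0} ≃
        {g : A ≃ₗ[K] B //
          (∀ x y, g (x * y) = g x * g y) ∧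
          (∀ i j, bB.repr (f (bA i)) j = 0 → bB.repr (g (bA i)) j = 0) ∧
          (∀ i j, bA.repr (f.symm (bB i)) j = 0 → bA.repr (g.symm (bB i)) j = 0)}) := by
  classical
  -- the backward map, from isomorphisms to zeros
  have hzero : ∀ g : A ≃ₗ[K] B, (∀ x y, g (x * y) = g x * g y) →
      (∀ i j, bB.repr (f (bA i)) j = 0 → bB.repr (g (bA i)) j = 0) →
      (∀ i j, bA.repr (f.symm (bB i)) j = 0 → bA.repr (g.symm (bB i)) j = 0) →
      ∀ p ∈ isoIdealInf K Λ A B bA bB f,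
        eval (Sum.elim (fun p : Λ × Λ => bB.repr (g (bA p.1)) p.2)
          (fun p : Λ × Λ => bA.repr (g.symm (bB p.1)) p.2)) p = 0 := by
    intro g hg1 hg2 hg3
    set a : ((Λ × Λ) ⊕ (Λ × Λ)) → K :=
      Sum.elim (fun p : Λ × Λ => bB.repr (g (bA p.1)) p.2)
        (fun p : Λ × Λ => bA.repr (g.symm (bB p.1)) p.2) with ha
    have hsuppg : ∀ i, (bB.repr (g (bA i))).support ⊆ (bB.repr (f (bA i))).support := by
      intro i j hj
      rw [Finsupp.mem_support_iff] at hj ⊢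
      exact fun h0 => hj (hg2 i j h0)
    have hsupph : ∀ i,
        (bA.repr (g.symm (bB i))).support ⊆ (bA.repr (f.symm (bB i))).support := by
      intro i j hj
      rw [Finsupp.mem_support_iff] at hj ⊢
      exact fun h0 => hj (hg3 i j h0)
    intro p hp
    have hker : isoIdealInf K Λ A B bA bB f ≤ RingHom.ker (eval a) := by
      rw [isoIdealInf, Ideal.span_le]
      intro x hx
      simp only [Set.mem_union, Set.mem_range, Set.mem_setOf_eq] at hx
      simp only [SetLike.mem_coe, RingHom.mem_ker]
      obtain ((((⟨⟨i, j, n⟩, rfl⟩ | ⟨⟨i, k⟩, rfl⟩) | ⟨⟨i, k⟩, rfl⟩) |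
        ⟨i, j, h0, rfl⟩) | ⟨i, j, h0, rfl⟩) := hx
      · -- p polynomial
        rw [eval_pPoly, sub_eq_zero]
        have lhs : (∑ k ∈ (bA.repr (bA i * bA j)).support,
            bA.repr (bA i * bA j) k * a (Sum.inl (k, n))) =
            bB.repr (g.toLinearMap (bA i * bA j)) n := by
          rw [repr_map_superset K Λ A B bA bB g.toLinearMap (bA i * bA j) (subset_refl _) n]
          simp [ha]
        have rhs : (∑ l ∈ (bB.repr (f (bA i))).support, ∑ m ∈ (bB.repr (f (bA j))).support,
            bB.repr (bB l * bB m) n * a (Sum.inl (i, l)) * a (Sum.inl (j, m))) =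
            bB.repr (g (bA i) * g (bA j)) n := by
          rw [repr_mul_superset K Λ B bB _ _ (hsuppg i) (hsuppg j) n]
          exact Finset.sum_congr rfl fun l _ => Finset.sum_congr rfl fun m _ => by
            simp [ha]; ring
        rw [lhs, rhs]
        simp only [LinearEquiv.coe_coe]
        rw [hg1]
      · -- q polynomial
        rw [eval_qPoly, sub_eq_zero]
        have : (∑ j ∈ (bB.repr (f (bA i))).support,
            a (Sum.inl (i, j)) * a (Sum.inr (j, k))) =
            bA.repr (g.symm.toLinearMap (g (bA i))) k := by
          rw [repr_map_superset' K Λ A B bA bB g.symm.toLinearMap (g (bA i)) (hsuppg i) k]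
          simp [ha]
        rw [this]
        simp only [LinearEquiv.coe_coe, LinearEquiv.symm_apply_apply, Module.Basis.repr_self,
          Finsupp.single_apply]
      · -- r polynomial
        rw [eval_rPoly, sub_eq_zero]
        have : (∑ j ∈ (bA.repr (f.symm (bB i))).support,
            a (Sum.inr (i, j)) * a (Sum.inl (j, k))) =
            bB.repr (g.toLinearMap (g.symm (bB i))) k := by
          rw [repr_map_superset K Λ A B bA bB g.toLinearMap (g.symm (bB i)) (hsupph i) k]
          simp [ha]
        rw [this]
        simp only [LinearEquiv.coe_coe, LinearEquiv.apply_symm_apply, Module.Basis.repr_self,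
          Finsupp.single_apply]
      · simpa [ha] using hg2 i j h0
      · simpa [ha] using hg3 i j h0
    exact RingHom.mem_ker.mp (hker hp)
  -- the backward map as a function between the subtypes
  set G : {g : A ≃ₗ[K] B //
        (∀ x y, g (x * y) = g x * g y) ∧
        (∀ i j, bB.repr (f (bA i)) j = 0 → bB.repr (g (bA i)) j = 0) ∧
        (∀ i j, bA.repr (f.symm (bB i)) j = 0 → bA.repr (g.symm (bB i)) j = 0)} →
      {a : ((Λ × Λ) ⊕ (Λ × Λ)) → K //
        ∀ p ∈ isoIdealInf K Λ A B bA bB f, eval a p = 0} :=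
    fun g => ⟨Sum.elim (fun p : Λ × Λ => bB.repr (g.1 (bA p.1)) p.2)
      (fun p : Λ × Λ => bA.repr (g.1.symm (bB p.1)) p.2),
      hzero g.1 g.2.1 g.2.2.1 g.2.2.2⟩ with hG
  have hinj : Function.Injective G := by
    intro g g' h
    have h' := congrArg Subtype.val h
    apply Subtype.ext
    apply LinearEquiv.toLinearMap_injective
    refine bA.ext fun i => ?_
    refine bB.repr.injective (Finsupp.ext fun j => ?_)
    have := congrFun h' (Sum.inl (i, j))
    simpa [hG] using this
  have hsurj : Function.Surjective G := by
    rintro ⟨a, ha⟩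
    obtain ⟨g, hg1, hg2, hg3⟩ := forwardInf K Λ A B bA bB f a ha
    refine ⟨⟨g, hg1, ?_, ?_⟩, ?_⟩
    · intro i j h0
      rw [hg2 i j]
      -- a (inl (i,j)) = 0 since X (inl (i,j)) is a generator
      have := ha (X (Sum.inl (i, j))) (Ideal.subset_span (Or.inl (Or.inr ⟨i, j, h0, rfl⟩)))
      simpa using this
    · intro i j h0
      rw [hg3 i j]
      have := ha (X (Sum.inr (i, j))) (Ideal.subset_span (Or.inr ⟨i, j, h0, rfl⟩))
      simpa using this
    · apply Subtype.ext
      funext x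
      obtain (⟨i, j⟩ | ⟨i, j⟩) := x
      · simpa [hG] using hg2 i j
      · simpa [hG] using hg3 i j
  exact ⟨(Equiv.ofBijective G ⟨hinj, hsurj⟩).symm⟩
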